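/- (Tangent cone of the example at the origin.) In ℝ³ with coordinates (x₁, x₂, x₃), let X₁ = {x : x₃ = 1 or x₃ = −1}, X₂ = {(1,0,0), (−1,0,0)}, and C = Conf({X₁, X₂}) = {x : infDist(x, X₁) = infDist(x, X₂)}. Then the Bouligand tangent cone of C at the origin equals the union of two transversally intersecting planes: tangentCone(C, 0) = { v ∈ ℝ³ : v₃² = v₁² } = {v : v₃ = v₁} ∪ {v : v₃ = −v₁}. -/

import Mathlib

open Metric Set
open Filter Topology

/-- The union of the two horizontal planes `x₃ = 1` and `x₃ = -1` in `ℝ³`. -/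
def Xone : Set (EuclideanSpace ℝ (Fin 3)) := {x | x 2 = 1 ∨ x 2 = -1}

/-- The two points `(1,0,0)` and `(-1,0,0)` in `ℝ³`. -/
noncomputable def Xtwo : Set (EuclideanSpace ℝ (Fin 3)) :=
  {EuclideanSpace.single (0 : Fin 3) (1 : ℝ), EuclideanSpace.single (0 : Fin 3) (-1 : ℝ)}

/-- The conflict set of `Xone` and `Xtwo`: points equidistant from them. -/
noncomputable def C : Set (EuclideanSpace ℝ (Fin 3)) :=
  {x | Metric.infDist x Xone = Metric.infDist x Xtwo}

namespace ConfAux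

noncomputable abbrev E3 := EuclideanSpace ℝ (Fin 3)

lemma le_infDist' {s : Set E3} {x : E3} {b : ℝ} (hs : s.Nonempty)
    (h : ∀ y ∈ s, b ≤ dist x y) : b ≤ Metric.infDist x s :=
  le_of_not_gt fun hlt => by
    obtain ⟨y, hy, hxy⟩ := (Metric.infDist_lt_iff hs).1 hlt
    exact (h y hy).not_gt hxy

lemma abs_coord_le_dist (x y : E3) (i : Fin 3) : |x i - y i| ≤ dist x y := by
  rw [EuclideanSpace.dist_eq]
  have h1 : |x i - y i| = Real.sqrt (dist (x i) (y i) ^ 2) := by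
    rw [Real.sqrt_sq_eq_abs, Real.dist_eq, abs_abs]
  rw [h1]
  apply Real.sqrt_le_sqrt
  exact Finset.single_le_sum (f := fun j => dist (x j) (y j) ^ 2)
    (fun j _ => sq_nonneg _) (Finset.mem_univ i)

lemma dist_update (x : E3) (c : ℝ) :
    dist x (WithLp.toLp 2 (Function.update x.ofLp 2 c) : E3) = |x 2 - c| := by
  rw [EuclideanSpace.dist_eq, Fin.sum_univ_three]
  have h0 : (WithLp.toLp 2 (Function.update x.ofLp 2 c) : E3) 0 = x 0 := Function.update_of_ne (by decide : (0:Fin 3) ≠ 2) c x.ofLp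
  have h1 : (WithLp.toLp 2 (Function.update x.ofLp 2 c) : E3) 1 = x 1 := Function.update_of_ne (by decide : (1:Fin 3) ≠ 2) c x.ofLp
  have h2 : (WithLp.toLp 2 (Function.update x.ofLp 2 c) : E3) 2 = c := Function.update_self (2:Fin 3) c x.ofLp
  rw [show dist (x 0) ((WithLp.toLp 2 (Function.update x.ofLp 2 c) : E3) 0) = 0 by rw [h0, dist_self],
    show dist (x 1) ((WithLp.toLp 2 (Function.update x.ofLp 2 c) : E3) 1) = 0 by rw [h1, dist_self],
    show dist (x 2) ((WithLp.toLp 2 (Function.update x.ofLp 2 c) : E3) 2) = dist (x 2) c by rw [h2]]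
  rw [Real.dist_eq]
  rw [show (0:ℝ)^2 + 0^2 + |x 2 - c|^2 = |x 2 - c|^2 by ring, Real.sqrt_sq_eq_abs, abs_abs]

lemma infDist_Xone (x : E3) (h : |x 2| ≤ 1) : Metric.infDist x Xone = 1 - |x 2| := by
  apply le_antisymm
  · rcases le_or_gt 0 (x 2) with hx | hx
    · have hm : (WithLp.toLp 2 (Function.update x.ofLp 2 (1:ℝ)) : E3) ∈ Xone := Or.inl (by simp)
      calc Metric.infDist x Xone ≤ dist x (WithLp.toLp 2 (Function.update x.ofLp 2 (1:ℝ)) : E3) :=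
            Metric.infDist_le_dist_of_mem hm
        _ = |x 2 - 1| := dist_update x 1
        _ = 1 - |x 2| := by rw [abs_of_nonneg hx] at h ⊢ <;> rw [abs_of_nonpos (by linarith)] <;> ring
    · have hm : (WithLp.toLp 2 (Function.update x.ofLp 2 (-1:ℝ)) : E3) ∈ Xone :=
        Or.inr (by simp)
      calc Metric.infDist x Xone ≤ dist x (WithLp.toLp 2 (Function.update x.ofLp 2 (-1:ℝ)) : E3) :=
            Metric.infDist_le_dist_of_mem hm
        _ = |x 2 - (-1)| := dist_update x (-1)
        _ = 1 - |x 2| := by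
            rw [abs_of_neg hx] at h ⊢; rw [abs_of_nonneg (by linarith)]; ring
  · apply le_infDist' ⟨(WithLp.toLp 2 (Function.update x.ofLp 2 (1:ℝ)) : E3), Or.inl (by simp)⟩
    rintro y (hy | hy) <;>
    · have h1 := abs_coord_le_dist x y 2
      have h2 := abs_sub_abs_le_abs_sub (y 2) (x 2)
      rw [abs_sub_comm] at h2
      rw [hy] at h1 h2
      simp only [abs_one, abs_neg] at h2
      linarith

lemma dist_single (x : E3) (c : ℝ) :
    dist x (EuclideanSpace.single (0 : Fin 3) c) =
      Real.sqrt ((x 0 - c) ^ 2 + (x 1) ^ 2 + (x 2) ^ 2) := by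
  rw [EuclideanSpace.dist_eq, Fin.sum_univ_three]
  simp only [EuclideanSpace.single_apply, Real.dist_eq]
  rw [if_neg (by decide : ¬(2:Fin 3) = 0)]
  norm_num [sq_abs]

lemma infDist_Xtwo (x : E3) :
    Metric.infDist x Xtwo =
      Real.sqrt ((1 - |x 0|) ^ 2 + (x 1) ^ 2 + (x 2) ^ 2) := by
  have hm1 : EuclideanSpace.single (0 : Fin 3) (1 : ℝ) ∈ Xtwo := Set.mem_insert _ _
  have hm2 : EuclideanSpace.single (0 : Fin 3) (-1 : ℝ) ∈ Xtwo :=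
    Set.mem_insert_of_mem _ rfl
  apply le_antisymm
  · rcases le_or_gt 0 (x 0) with hx | hx
    · calc Metric.infDist x Xtwo ≤ dist x (EuclideanSpace.single (0 : Fin 3) (1 : ℝ)) :=
            Metric.infDist_le_dist_of_mem hm1
        _ = _ := by rw [dist_single, abs_of_nonneg hx]; ring_nf
    · calc Metric.infDist x Xtwo ≤ dist x (EuclideanSpace.single (0 : Fin 3) (-1 : ℝ)) :=
            Metric.infDist_le_dist_of_mem hm2
        _ = _ := by rw [dist_single, abs_of_neg hx]; ring_nf
  · apply le_infDist' ⟨_, hm1⟩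
    rintro y (rfl | rfl) <;> rw [dist_single] <;> apply Real.sqrt_le_sqrt <;>
      nlinarith [le_abs_self (x 0), neg_abs_le (x 0), abs_nonneg (x 0), sq_abs (x 0)]

lemma mem_C_iff (x : E3) (h : |x 2| ≤ 1) :
    x ∈ C ↔ 2 * |x 0| - 2 * |x 2| = (x 0) ^ 2 + (x 1) ^ 2 := by
  have hmem : x ∈ C ↔ Metric.infDist x Xone = Metric.infDist x Xtwo := Iff.rfl
  rw [hmem, infDist_Xone x h, infDist_Xtwo x]
  have hS : (0:ℝ) ≤ (1 - |x 0|) ^ 2 + (x 1) ^ 2 + (x 2) ^ 2 := by positivity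
  constructor
  · intro he
    have h2 : (1 - |x 2|) ^ 2 = (1 - |x 0|) ^ 2 + (x 1) ^ 2 + (x 2) ^ 2 := by
      rw [he, Real.sq_sqrt hS]
    nlinarith [sq_abs (x 0), sq_abs (x 2)]
  · intro he
    have h2 : (1 - |x 2|) ^ 2 = (1 - |x 0|) ^ 2 + (x 1) ^ 2 + (x 2) ^ 2 := by
      nlinarith [sq_abs (x 0), sq_abs (x 2)]
    rw [← h2, Real.sqrt_sq (by linarith)]

lemma tendsto_coord {f : ℕ → E3} {l : E3} (hf : Filter.Tendsto f atTop (𝓝 l)) (i : Fin 3) :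
    Filter.Tendsto (fun n => f n i) atTop (𝓝 (l i)) := by
  exact ((EuclideanSpace.proj (𝕜 := ℝ) i).continuous.tendsto l).comp hf

lemma tendsto_E3 {f : ℕ → E3} {l : E3}
    (h : ∀ i, Filter.Tendsto (fun n => f n i) atTop (𝓝 (l i))) :
    Filter.Tendsto f atTop (𝓝 l) := by
  have h1 : Filter.Tendsto (fun n => (WithLp.equiv 2 (Fin 3 → ℝ)) (f n)) atTop
      (𝓝 ((WithLp.equiv 2 (Fin 3 → ℝ)) l)) := tendsto_pi_nhds.2 h
  exact ((PiLp.continuous_toLp 2 fun _ : Fin 3 => ℝ).tendsto _).comp h1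

lemma forward : tangentConeAt ℝ C 0 ⊆ {v : E3 | (v 2) ^ 2 = (v 0) ^ 2} := by
  intro v hv
  obtain ⟨c, d, hd0, hd, hcd⟩ := mem_tangentConeAt_iff_exists_seq.1 hv
  have hdi : ∀ i, Filter.Tendsto (fun n => d n i) atTop (𝓝 0) := by
    intro i; simpa using tendsto_coord hd0 i
  have hcdi : ∀ i, Filter.Tendsto (fun n => c n * d n i) atTop (𝓝 (v i)) := by
    intro i; exact tendsto_coord hcd i
  have hd' : ∀ᶠ n in atTop, d n ∈ C := by
    filter_upwards [hd] with n hn; simpa using hn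
  have hsmall : ∀ᶠ n in atTop, |d n 2| ≤ 1 := by
    filter_upwards [(hdi 2).eventually (eventually_abs_sub_lt 0 one_pos)] with n hn
    rw [sub_zero] at hn; exact hn.le
  have heq : ∀ᶠ n in atTop,
      2 * |d n 0| - 2 * |d n 2| = (d n 0) ^ 2 + (d n 1) ^ 2 := by
    filter_upwards [hd', hsmall] with n h1 h2
    exact (mem_C_iff (d n) h2).1 h1
  set A : ℕ → ℝ := fun n => 2 * |c n * d n 0| - 2 * |c n * d n 2| with hA_def
  set B : ℕ → ℝ := fun n => |c n * d n 0| * |d n 0| + |c n * d n 1| * |d n 1| with hB_def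
  have hAB : A =ᶠ[atTop] B := by
    filter_upwards [heq] with n hn
    have e1 : A n = |c n| * (2 * |d n 0| - 2 * |d n 2|) := by
      simp only [hA_def, abs_mul]; ring
    have e2 : B n = |c n| * ((d n 0) ^ 2 + (d n 1) ^ 2) := by
      simp only [hB_def, abs_mul, mul_assoc, abs_mul_abs_self]
      ring
    rw [e1, e2, hn]
  have hA : Filter.Tendsto A atTop (𝓝 (2 * |v 0| - 2 * |v 2|)) :=
    (((hcdi 0).abs.const_mul 2).sub ((hcdi 2).abs.const_mul 2))
  have hB : Filter.Tendsto B atTop (𝓝 (|v 0| * |(0:ℝ)| + |v 1| * |(0:ℝ)|)) :=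
    ((hcdi 0).abs.mul (hdi 0).abs).add ((hcdi 1).abs.mul (hdi 1).abs)
  have key : 2 * |v 0| - 2 * |v 2| = |v 0| * |(0:ℝ)| + |v 1| * |(0:ℝ)| :=
    tendsto_nhds_unique (hA.congr' hAB) hB
  simp only [abs_zero, mul_zero, add_zero] at key
  have habs : |v 2| = |v 0| := by linarith
  show (v 2) ^ 2 = (v 0) ^ 2
  rw [← sq_abs (v 2), ← sq_abs (v 0), habs]

lemma mem_tc_of_old {v : E3} (c : ℕ → ℝ) (d : ℕ → E3) (hd : ∀ᶠ n in atTop, (0 : E3) + d n ∈ C)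
    (hc : Tendsto (fun n => ‖c n‖) atTop atTop) (hcd : Tendsto (fun n => c n • d n) atTop (𝓝 v)) :
    v ∈ tangentConeAt ℝ C 0 :=
  mem_tangentConeAt_of_seq atTop c d (tangentConeAt.lim_zero atTop hc hcd) hd hcd

set_option maxHeartbeats 1000000 in
lemma backward : {v : E3 | (v 2) ^ 2 = (v 0) ^ 2} ⊆ tangentConeAt ℝ C 0 := by
  intro v hv
  simp only [Set.mem_setOf_eq] at hv
  have habs : |v 2| = |v 0| := by
    rw [← sq_abs (v 2), ← sq_abs (v 0)] at hv
    nlinarith [abs_nonneg (v 2), abs_nonneg (v 0)]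
  set K : ℝ := (v 0) ^ 2 + (v 1) ^ 2 / 2 + 1 with hK_def
  have hK : 1 ≤ K := by rw [hK_def]; nlinarith [sq_nonneg (v 0), sq_nonneg (v 1)]
  have hK0 : 0 < K := by linarith
  have hKmul : ∀ r : ℝ, K * r = (v 0) ^ 2 * r + (v 1) ^ 2 / 2 * r + r := fun r => by
    rw [hK_def]; ring
  set σ : ℝ := if v 0 < 0 then -1 else 1 with hσ_def
  set τ : ℝ := if v 2 < 0 then -1 else 1 with hτ_def
  have hσ : σ * |v 0| = v 0 := by
    rw [hσ_def]; split
    · rw [abs_of_neg (by assumption)]; ring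
    · rw [abs_of_nonneg (by linarith [not_lt.1 (by assumption : ¬ v 0 < 0)])]; ring
  have hτ : τ * |v 2| = v 2 := by
    rw [hτ_def]; split
    · rw [abs_of_neg (by assumption)]; ring
    · rw [abs_of_nonneg (by linarith [not_lt.1 (by assumption : ¬ v 2 < 0)])]; ring
  have hσ1 : |σ| = 1 := by rw [hσ_def]; split <;> simp
  have hτ1 : |τ| = 1 := by rw [hτ_def]; split <;> simp
  have hσ2 : σ ^ 2 = 1 := by rw [hσ_def]; split <;> norm_num
  have hτ0 : τ * |v 0| = v 2 := by rw [← habs]; exact hτ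
  set t : ℕ → ℝ := fun n => 1 / ((n : ℝ) + 1) with ht_def
  have ht_pos : ∀ n, 0 < t n := fun n => by rw [ht_def]; positivity
  have ht0 : Filter.Tendsto t atTop (𝓝 0) := by
    rw [ht_def]; exact tendsto_one_div_add_atTop_nhds_zero_nat
  set c : ℕ → ℝ := fun n => (n : ℝ) + 1 with hc_def
  have hc_eq : ∀ n, c n = (n : ℝ) + 1 := fun n => rfl
  have hct : ∀ n, c n * t n = 1 := fun n => by
    rw [hc_def, ht_def]; field_simp
  set X : ℕ → ℝ := fun n => t n * |v 0| + K * (t n) ^ 2 with hX_def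
  have hX_eq : ∀ n, X n = t n * |v 0| + K * (t n) ^ 2 := fun n => rfl
  set b : ℕ → ℝ := fun n => t n * v 1 with hb_def
  have hb_eq : ∀ n, b n = t n * v 1 := fun n => rfl
  set m : ℕ → ℝ := fun n => X n - ((X n) ^ 2 + (b n) ^ 2) / 2 with hm_def
  have hm_eq : ∀ n, m n = X n - ((X n) ^ 2 + (b n) ^ 2) / 2 := fun n => rfl
  set a : ℕ → ℝ := fun n => σ * X n with ha_def
  have ha_eq : ∀ n, a n = σ * X n := fun n => rfl
  set z : ℕ → ℝ := fun n => τ * m n with hz_def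
  have hz_eq : ∀ n, z n = τ * m n := fun n => rfl
  set d : ℕ → E3 := fun n => (WithLp.equiv 2 (Fin 3 → ℝ)).symm ![a n, b n, z n] with hd_def
  have hd0 : ∀ n, d n 0 = a n := fun n => rfl
  have hd1 : ∀ n, d n 1 = b n := fun n => rfl
  have hd2 : ∀ n, d n 2 = z n := fun n => rfl
  clear_value K σ τ t c X b m a z d
  clear hK_def hσ_def hτ_def ht_def hc_def hX_def hb_def hm_def ha_def hz_def hd_def
  have hX_pos : ∀ n, 0 ≤ X n := fun n => by
    rw [hX_eq n]
    have := ht_pos n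
    have := abs_nonneg (v 0)
    positivity
  have hεpos : 0 < min (1 / K) (1 / (|v 0| + K)) := by
    apply lt_min <;> positivity
  have hev : ∀ᶠ n in atTop, t n < min (1 / K) (1 / (|v 0| + K)) := by
    have := ht0.eventually (eventually_abs_sub_lt 0 hεpos)
    filter_upwards [this] with n hn
    rw [sub_zero] at hn
    exact (le_abs_self _).trans_lt hn
  have hm_nonneg : ∀ n, t n < 1 / K → 0 ≤ m n := by
    intro n hn
    have h1 : K * t n < 1 := by
      rw [lt_div_iff₀ hK0] at hn; linarith [mul_comm (t n) K]
    have htn := ht_pos n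
    have hKt : 0 ≤ K * t n := (mul_pos hK0 htn).le
    have h2 : (t n * |v 0| + K * t n ^ 2) ^ 2 ≤
        2 * (t n) ^ 2 * (v 0) ^ 2 + 2 * K ^ 2 * (t n) ^ 4 := by
      nlinarith [sq_nonneg (t n * |v 0| - K * t n ^ 2), sq_abs (v 0)]
    have h4 : (K * t n) ^ 2 ≤ 1 := by nlinarith
    have h3 : K ^ 2 * (t n) ^ 4 ≤ (t n) ^ 2 := by
      linarith [mul_le_mul_of_nonneg_left h4 (sq_nonneg (t n))]
    have e1 : K * t n ^ 2 = (v 0) ^ 2 * t n ^ 2 + (v 1) ^ 2 / 2 * t n ^ 2 + t n ^ 2 :=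
      hKmul _
    rw [hm_eq n, hX_eq n, hb_eq n]
    linarith [mul_nonneg htn.le (abs_nonneg (v 0)), h2, h3, e1]
  have hm_le : ∀ n, t n < 1 / (|v 0| + K) → m n ≤ 1 := by
    intro n hn
    have h1 : (|v 0| + K) * t n < 1 := by
      rw [lt_div_iff₀ (by positivity)] at hn; linarith [mul_comm (t n) (|v 0| + K)]
    have htn := ht_pos n
    have ht1 : t n < 1 := by nlinarith [abs_nonneg (v 0)]
    have hmX : m n ≤ X n := by
      have h0 : 0 ≤ ((X n) ^ 2 + (b n) ^ 2) / 2 := by positivity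
      rw [hm_eq n]; linarith
    have hXle : X n ≤ (|v 0| + K) * t n := by
      rw [hX_eq n]
      nlinarith [mul_pos hK0 htn]
    linarith
  refine mem_tc_of_old c d ?_ ?_ ?_
  · filter_upwards [hev] with n hn
    obtain ⟨hn1, hn2⟩ := lt_min_iff.1 hn
    have hm0 := hm_nonneg n hn1
    have hm1 := hm_le n hn2
    rw [zero_add]
    apply (mem_C_iff (d n) ?_).2
    · rw [hd0 n, hd1 n, hd2 n, ha_eq n, hz_eq n, abs_mul, abs_mul, hσ1, hτ1, one_mul,
        one_mul, abs_of_nonneg (hX_pos n), abs_of_nonneg hm0, hm_eq n, mul_pow, hσ2, one_mul]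
      ring
    · rw [hd2 n, hz_eq n, abs_mul, hτ1, one_mul, abs_of_nonneg hm0]
      exact hm1
  · have h1 : Filter.Tendsto (fun n : ℕ => (n : ℝ) + 1) atTop atTop :=
      tendsto_atTop_add_const_right atTop 1 tendsto_natCast_atTop_atTop
    apply h1.congr
    intro n
    rw [hc_eq n, Real.norm_of_nonneg (by positivity)]
  · apply tendsto_E3
    intro i
    have hsmul : ∀ n, (c n • d n : E3) i = c n * d n i := fun n => rfl
    have hX0 : Filter.Tendsto X atTop (𝓝 0) := by
      have h := (ht0.mul_const |v 0|).add ((ht0.pow 2).const_mul K)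
      rw [zero_mul, zero_pow (by norm_num), mul_zero, add_zero] at h
      exact h.congr fun n => (hX_eq n).symm
    have hb0 : Filter.Tendsto b atTop (𝓝 0) := by
      have h := ht0.mul_const (v 1)
      rw [zero_mul] at h
      exact h.congr fun n => (hb_eq n).symm
    fin_cases i
    · -- coordinate 0
      have key : ∀ n, c n * d n 0 = σ * (|v 0| + K * t n) := by
        intro n
        rw [hd0 n, ha_eq n, hX_eq n]
        have h := hct n
        calc c n * (σ * (t n * |v 0| + K * t n ^ 2))
            = σ * ((c n * t n) * |v 0| + K * (c n * t n) * t n) := by ring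
          _ = σ * (|v 0| + K * t n) := by rw [h]; ring
      have hlim : Filter.Tendsto (fun n => σ * (|v 0| + K * t n)) atTop
          (𝓝 (σ * (|v 0| + K * 0))) :=
        (tendsto_const_nhds.add (ht0.const_mul K)).const_mul σ
      rw [mul_zero, add_zero, hσ] at hlim
      exact hlim.congr fun n => (key n).symm.trans (hsmul n).symm
    · -- coordinate 1
      have key : ∀ n, c n * d n 1 = v 1 := by
        intro n
        rw [hd1 n, hb_eq n]
        calc c n * (t n * v 1) = (c n * t n) * v 1 := by ring
          _ = v 1 := by rw [hct n]; ring
      exact tendsto_const_nhds.congr fun n => (key n).symm.trans (hsmul n).symm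
    · -- coordinate 2
      have key : ∀ n, c n * d n 2 =
          τ * ((|v 0| + K * t n) - ((|v 0| + K * t n) * X n + v 1 * b n) / 2) := by
        intro n
        have h := hct n
        have hXc : c n * X n = |v 0| + K * t n := by
          rw [hX_eq n]
          calc c n * (t n * |v 0| + K * t n ^ 2)
              = (c n * t n) * |v 0| + K * (c n * t n) * t n := by ring
            _ = |v 0| + K * t n := by rw [h]; ring
        have hbc : c n * b n = v 1 := by
          rw [hb_eq n]
          calc c n * (t n * v 1) = (c n * t n) * v 1 := by ring
            _ = v 1 := by rw [h]; ring
        rw [hd2 n, hz_eq n, hm_eq n]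
        calc c n * (τ * (X n - (X n ^ 2 + b n ^ 2) / 2))
            = τ * (c n * X n - ((c n * X n) * X n + (c n * b n) * b n) / 2) := by ring
          _ = _ := by rw [hXc, hbc]
      have hlim : Filter.Tendsto
          (fun n => τ * ((|v 0| + K * t n) - ((|v 0| + K * t n) * X n + v 1 * b n) / 2)) atTop
          (𝓝 (τ * ((|v 0| + K * 0) - ((|v 0| + K * 0) * 0 + v 1 * 0) / 2))) := by
        apply Filter.Tendsto.const_mul
        apply Filter.Tendsto.sub
        · exact tendsto_const_nhds.add (ht0.const_mul K)
        · apply Filter.Tendsto.div_const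
          apply Filter.Tendsto.add
          · exact (tendsto_const_nhds.add (ht0.const_mul K)).mul hX0
          · exact hb0.const_mul (v 1)
      have heq2 : τ * ((|v 0| + K * 0) - ((|v 0| + K * 0) * 0 + v 1 * 0) / 2) = v 2 := by
        rw [mul_zero, add_zero, mul_zero, mul_zero, zero_add, zero_div, sub_zero, hτ0]
      rw [heq2] at hlim
      exact hlim.congr fun n => ((key n).symm.trans (hsmul n).symm)

end ConfAux

theorem tangentCone_conf_example :
    tangentConeAt ℝ C 0 = {v : EuclideanSpace ℝ (Fin 3) | (v 2) ^ 2 = (v 0) ^ 2} ∧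
      {v : EuclideanSpace ℝ (Fin 3) | (v 2) ^ 2 = (v 0) ^ 2} =
        {v : EuclideanSpace ℝ (Fin 3) | v 2 = v 0} ∪
          {v : EuclideanSpace ℝ (Fin 3) | v 2 = -(v 0)} := by
  constructor
  · exact Set.Subset.antisymm ConfAux.forward ConfAux.backward
  · ext v
    simp only [Set.mem_setOf_eq, Set.mem_union]
    constructor
    · intro h
      have habs : |v 2| = |v 0| := by
        nlinarith [sq_abs (v 2), sq_abs (v 0), abs_nonneg (v 2), abs_nonneg (v 0)]
      exact abs_eq_abs.mp habs
    · rintro (h | h) <;> rw [h] <;> ring
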